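/- If a function f: ℝ^m_{≥0} → ℝ_{≥0} is quasi-concave, non-decreasing, and positively 1-homogeneous (f(cx) = c·f(x) for all c > 0), then f is concave. -/

import Mathlib

theorem stmt2 {m : ℕ} (f : (Fin m → ℝ) → ℝ)
    (hnn : ∀ x : Fin m → ℝ, 0 ≤ x → 0 ≤ f x)
    (hqc : ∀ α : ℝ, Convex ℝ {x : Fin m → ℝ | 0 ≤ x ∧ α ≤ f x})
    (hmono : ∀ x y : Fin m → ℝ, 0 ≤ y → y ≤ x → f y ≤ f x)
    (hhom : ∀ c : ℝ, 0 < c → ∀ x : Fin m → ℝ, 0 ≤ x → f (c • x) = c * f x) :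
    ConcaveOn ℝ {x : Fin m → ℝ | 0 ≤ x} f := by
  constructor
  · intro x hx y hy a b ha hb hab
    exact add_nonneg (smul_nonneg ha hx) (smul_nonneg hb (show (0:Fin m → ℝ) ≤ y from hy))
  · intro x hx y hy a b ha hb hab
    simp only [Set.mem_setOf_eq] at hx hy
    rcases ha.eq_or_lt with rfl | ha'
    · simp only [zero_add] at hab; subst hab; simp
    rcases hb.eq_or_lt with rfl | hb'
    · simp only [add_zero] at hab; subst hab; simp
    have hs := hnn x hx
    have ht := hnn y hy
    simp only [smul_eq_mul]
    rcases hs.eq_or_lt with hs0 | hs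
    · -- f x = 0
      have h1 : f (b • y) ≤ f (a • x + b • y) :=
        hmono _ _ (smul_nonneg hb hy) (le_add_of_nonneg_left (smul_nonneg ha hx))
      rw [hhom b hb' y hy] at h1
      rw [← hs0]; linarith
    rcases ht.eq_or_lt with ht0 | ht
    · -- f y = 0
      have h1 : f (a • x) ≤ f (a • x + b • y) :=
        hmono _ _ (smul_nonneg ha hx) (le_add_of_nonneg_right (smul_nonneg hb hy))
      rw [hhom a ha' x hx] at h1
      rw [← ht0]; linarith
    · -- main case
      set S := a * f x + b * f y with hS
      have hSpos : 0 < S := add_pos (mul_pos ha' hs) (mul_pos hb' ht)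
      have hux : (0:Fin m → ℝ) ≤ (f x)⁻¹ • x := smul_nonneg (inv_pos.mpr hs).le hx
      have huy : (0:Fin m → ℝ) ≤ (f y)⁻¹ • y := smul_nonneg (inv_pos.mpr ht).le hy
      have hfux : f ((f x)⁻¹ • x) = 1 := by
        rw [hhom _ (inv_pos.mpr hs) x hx]; field_simp
      have hfuy : f ((f y)⁻¹ • y) = 1 := by
        rw [hhom _ (inv_pos.mpr ht) y hy]; field_simp
      have hmem := hqc 1 ⟨hux, hfux.ge⟩ ⟨huy, hfuy.ge⟩
        (show (0:ℝ) ≤ a * f x / S from div_nonneg (mul_pos ha' hs).le hSpos.le)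
        (show (0:ℝ) ≤ b * f y / S from div_nonneg (mul_pos hb' ht).le hSpos.le)
        (by field_simp; exact hS.symm)
      set z := (a * f x / S) • ((f x)⁻¹ • x) + (b * f y / S) • ((f y)⁻¹ • y) with hz
      have key : a • x + b • y = S • z := by
        funext i
        simp only [hz, Pi.add_apply, Pi.smul_apply, smul_eq_mul]
        field_simp
      calc a * f x + b * f y = S * 1 := by rw [mul_one]
        _ ≤ S * f z := by
            exact mul_le_mul_of_nonneg_left hmem.2 hSpos.le
        _ = f (S • z) := (hhom S hSpos z hmem.1).symm
        _ = f (a • x + b • y) := by rw [key]
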